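/- Let γ : X → ℝ be convex and upper semicontinuous on a real Banach (or locally convex) space X, and let C := {x ∈ X : γ(x) < 0}. Then C is open and convex; and if C is nonempty, then the adjoint set C⁺ equals {φ : X → ℝ affine : there exists μ ≥ 0 with φ(x) + μγ(x) ≥ 0 for all x ∈ X}. -/

import Mathlib

open Filter Set

/-- `φ : X → ℝ` is a continuous affine function. -/
def IsAffineFn {X : Type*} [NormedAddCommGroup X] [NormedSpace ℝ X] (φ : X → ℝ) : Prop :=
  ∃ (x' : X →L[ℝ] ℝ) (t : ℝ), ∀ x, φ x = x' x + t

/-- The adjoint set `C⁺` of a set `C`: continuous affine functions nonnegative on `C`. -/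
def adjointSet {X : Type*} [NormedAddCommGroup X] [NormedSpace ℝ X] (C : Set X) :
    Set (X → ℝ) :=
  {φ | IsAffineFn φ ∧ ∀ x ∈ C, 0 ≤ φ x}

theorem stmt13 {X : Type*} [NormedAddCommGroup X] [NormedSpace ℝ X]
    (γ : X → ℝ) (hconv : ConvexOn ℝ Set.univ γ) (husc : UpperSemicontinuous γ) :
    IsOpen {x : X | γ x < 0} ∧ Convex ℝ {x : X | γ x < 0} ∧
      ({x : X | γ x < 0}.Nonempty →
        adjointSet {x : X | γ x < 0} =
          {φ : X → ℝ | IsAffineFn φ ∧ ∃ μ : ℝ, 0 ≤ μ ∧ ∀ x, 0 ≤ φ x + μ * γ x}) := by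
  refine ⟨upperSemicontinuous_iff_isOpen_preimage.mp husc 0, by simpa using hconv.convex_lt 0, ?_⟩
  rintro ⟨x₀, hx₀⟩
  ext φ
  simp only [adjointSet, Set.mem_setOf_eq]
  constructor
  · rintro ⟨haff, hpos⟩
    refine ⟨haff, ?_⟩
    obtain ⟨x', t, hφ⟩ := haff
    have haffid : ∀ (s : ℝ) (u v : X),
        φ ((1 - s) • u + s • v) = (1 - s) * φ u + s * φ v := by
      intro s u v
      simp [hφ, map_add, map_smul]
      ring
    have key : ∀ y, γ y < 0 → ∀ x, 0 ≤ γ x → 0 ≤ γ x * φ y + (-γ y) * φ x := by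
      intro y hy x hx
      set a := γ y with ha
      set c := γ x with hc
      have hca : 0 < c - a := by linarith
      set t₀ : ℝ := -a / (c - a) with ht₀
      have ht₀pos : 0 < t₀ := div_pos (by linarith) hca
      have hseg : ∀ s : ℝ, 0 ≤ s → s < t₀ → 0 ≤ (1 - s) * φ y + s * φ x := by
        intro s hs0 hst
        have ht₀le : t₀ ≤ 1 := by rw [div_le_one hca]; linarith
        have hs1 : s ≤ 1 := by linarith
        have hγ : γ ((1 - s) • y + s • x) ≤ (1 - s) * a + s * c :=
          hconv.2 (mem_univ y) (mem_univ x) (by linarith) hs0 (by ring)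
        have hlt : (1 - s) * a + s * c < 0 := by
          have h2 : t₀ * (c - a) = -a := div_mul_cancel₀ _ hca.ne'
          nlinarith [mul_lt_mul_of_pos_right hst hca]
        have hmem : γ ((1 - s) • y + s • x) < 0 := lt_of_le_of_lt hγ hlt
        have := hpos _ hmem
        rwa [haffid] at this
      have hcont : Continuous fun s : ℝ => (1 - s) * φ y + s * φ x := by continuity
      have hlim : Tendsto (fun s : ℝ => (1 - s) * φ y + s * φ x) (nhdsWithin t₀ (Iio t₀))
          (nhds ((1 - t₀) * φ y + t₀ * φ x)) :=
        (hcont.tendsto t₀).mono_left nhdsWithin_le_nhds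
      have hval : 0 ≤ (1 - t₀) * φ y + t₀ * φ x := by
        refine ge_of_tendsto hlim ?_
        filter_upwards [Ioo_mem_nhdsLT_of_mem ⟨ht₀pos, le_refl t₀⟩] with s hs
        exact hseg s hs.1.le hs.2
      have h1 : (1 - t₀) * (c - a) = c := by
        rw [ht₀]; field_simp; ring
      have h2 : t₀ * (c - a) = -a := div_mul_cancel₀ _ hca.ne'
      have hexp : ((1 - t₀) * φ y + t₀ * φ x) * (c - a) = c * φ y + -a * φ x := by
        linear_combination φ y * h1 + φ x * h2
      nlinarith [mul_nonneg hval hca.le]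
    set S : Set ℝ := (fun z => φ z / (-γ z)) '' {x | γ x < 0} with hS
    have hSne : S.Nonempty := ⟨_, ⟨x₀, hx₀, rfl⟩⟩
    have hSnonneg : ∀ r ∈ S, 0 ≤ r := by
      rintro r ⟨z, hz, rfl⟩
      have hz' : γ z < 0 := hz
      exact div_nonneg (hpos z hz') (by linarith)
    have hbdd : BddBelow S := ⟨0, fun r hr => hSnonneg r hr⟩
    set μ := sInf S with hμdef
    have hμ0 : 0 ≤ μ := le_csInf hSne hSnonneg
    refine ⟨μ, hμ0, ?_⟩
    intro x
    by_cases hx : γ x < 0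
    · have hle : μ ≤ φ x / (-γ x) := csInf_le hbdd ⟨x, hx, rfl⟩
      have hneg : (0 : ℝ) < -γ x := by linarith
      rw [le_div_iff₀ hneg] at hle
      nlinarith
    · push_neg at hx
      have h1 : ∀ r ∈ S, 0 ≤ γ x * r + φ x := by
        rintro r ⟨z, hz, rfl⟩
        have hz' : γ z < 0 := hz
        have hk := key z hz' x hx
        have hneg : (0 : ℝ) < -γ z := by linarith
        have h2 : 0 ≤ (γ x * φ z + (-γ z) * φ x) / (-γ z) := div_nonneg hk hneg.le
        rw [add_div, mul_div_assoc, mul_div_cancel_left₀ _ hneg.ne'] at h2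
        exact h2
      rcases hx.eq_or_lt with heq | hlt
      · have h0 := h1 _ ⟨x₀, hx₀, rfl⟩
        rw [← heq] at h0 ⊢
        simpa using h0
      · have hμge : -φ x / γ x ≤ μ := by
          refine le_csInf hSne fun r hr => ?_
          have := h1 r hr
          rw [div_le_iff₀ hlt]
          nlinarith
        rw [div_le_iff₀ hlt] at hμge
        nlinarith
  · rintro ⟨haff, μ, hμ, hall⟩
    refine ⟨haff, fun x hx => ?_⟩
    have hx' : γ x < 0 := hx
    nlinarith [hall x, mul_nonneg hμ (neg_nonneg.2 hx'.le)]
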